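/- Let σ, τ be i.i.d. [-1,1]-valued, ψ(u,v,λ) and φ(u,v) as above. Then ψ(u,v,λ) ≤ ψ(u,v,0) + λ·(∂_u φ(u,v))² + 2λ² for all λ ≥ 0. -/

import Mathlib

set_option autoImplicit false

open MeasureTheory ProbabilityTheory Real

private lemma hoeff_core {p q : ℝ} (hp : 0 ≤ p) (hq : 0 ≤ q) (hpq : p + q = 1) (t : ℝ) :
    p * Real.exp t + q * Real.exp (-t) ≤ Real.exp ((p - q) * t + t ^ 2 / 2) := by
  set D : ℝ → ℝ := fun s => p * Real.exp s + q * Real.exp (-s) with hD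
  set N : ℝ → ℝ := fun s => p * Real.exp s - q * Real.exp (-s) with hN
  have hDpos : ∀ s, 0 < D s := by
    intro s
    rcases eq_or_lt_of_le hp with h | h
    · have hq1 : q = 1 := by linarith
      simp [hD, ← h, hq1, Real.exp_pos]
    · have h1 := mul_nonneg hq (Real.exp_pos (-s)).le
      have h2 := mul_pos h (Real.exp_pos s)
      simp only [hD]; linarith
  have hexpneg : ∀ s : ℝ, HasDerivAt (fun s : ℝ => Real.exp (-s)) (-Real.exp (-s)) s := by
    intro s
    exact ((Real.hasDerivAt_exp (-s)).comp s (hasDerivAt_neg s)).congr_deriv (by ring)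
  have hDd : ∀ s, HasDerivAt D (N s) s := by
    intro s
    have := ((Real.hasDerivAt_exp s).const_mul p).add ((hexpneg s).const_mul q)
    exact this.congr_deriv (by simp only [hN]; ring)
  have hNd : ∀ s, HasDerivAt N (D s) s := by
    intro s
    have := ((Real.hasDerivAt_exp s).const_mul p).sub ((hexpneg s).const_mul q)
    exact this.congr_deriv (by simp only [hD]; ring)
  clear_value D N
  set G : ℝ → ℝ := fun s => (p - q) * s + s ^ 2 / 2 - Real.log (D s) with hG
  set g' : ℝ → ℝ := fun s => (p - q) + s - N s / D s with hg'
  have hGd : ∀ s, HasDerivAt G (g' s) s := by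
    intro s
    have h1 : HasDerivAt (fun s : ℝ => (p - q) * s + s ^ 2 / 2) ((p - q) + s) s := by
      have ha := (hasDerivAt_id s).const_mul (p - q)
      have hb := (hasDerivAt_pow 2 s).div_const 2
      exact (ha.add hb).congr_deriv (by push_cast; ring)
    exact h1.sub ((hDd s).log (hDpos s).ne')
  have hG'd : ∀ s, HasDerivAt g' ((N s / D s) ^ 2) s := by
    intro s
    have hquot := (hNd s).div (hDd s) (hDpos s).ne'
    have h1 : HasDerivAt (fun s : ℝ => (p - q) + s) 1 s :=
      (hasDerivAt_id s).const_add (p - q)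
    have := h1.sub hquot
    have hne := (hDpos s).ne'
    exact this.congr_deriv (by field_simp; ring)
  have hmono : Monotone g' :=
    monotone_of_deriv_nonneg (fun s => (hG'd s).differentiableAt)
      (fun s => by rw [(hG'd s).deriv]; positivity)
  have hg'0 : g' 0 = 0 := by
    simp only [hg', hN, hD]
    rw [neg_zero, Real.exp_zero]
    rw [show p * 1 + q * 1 = 1 by linarith]
    simp
  have hGdiff : Differentiable ℝ G := fun s => (hGd s).differentiableAt
  have hG0 : G 0 = 0 := by
    simp only [hG, hD]
    rw [neg_zero, Real.exp_zero]
    rw [show p * 1 + q * 1 = 1 by linarith]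
    simp
  have hGe : 0 ≤ G t := by
    rcases le_total 0 t with ht | ht
    · have : MonotoneOn G (Set.Ici 0) := by
        apply monotoneOn_of_deriv_nonneg (convex_Ici 0) hGdiff.continuous.continuousOn
        · exact fun s _ => hGdiff s |>.differentiableWithinAt
        · intro s hs
          rw [(hGd s).deriv, ← hg'0]
          exact hmono (le_of_lt (by simpa using hs))
      have := this (Set.self_mem_Ici) ht ht
      linarith [hG0 ▸ this]
    · have : AntitoneOn G (Set.Iic 0) := by
        apply antitoneOn_of_deriv_nonpos (convex_Iic 0) hGdiff.continuous.continuousOn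
        · exact fun s _ => hGdiff s |>.differentiableWithinAt
        · intro s hs
          rw [(hGd s).deriv, ← hg'0]
          exact hmono (le_of_lt (by simpa using hs))
      have := this ht Set.self_mem_Iic ht
      linarith [hG0 ▸ this]
  have hlog : Real.log (D t) ≤ (p - q) * t + t ^ 2 / 2 := by
    simp only [hG] at hGe; linarith
  rw [show p * Real.exp t + q * Real.exp (-t) = D t from by rw [hD]]
  calc D t = Real.exp (Real.log (D t)) := (Real.exp_log (hDpos t)).symm
    _ ≤ Real.exp ((p - q) * t + t ^ 2 / 2) := Real.exp_le_exp.2 hlog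



private lemma hoeff_m {m : ℝ} (hm : |m| ≤ 1) (t : ℝ) :
    (1 + m) / 2 * Real.exp t + (1 - m) / 2 * Real.exp (-t)
      ≤ Real.exp (m * t + t ^ 2 / 2) := by
  obtain ⟨h1, h2⟩ := abs_le.1 hm
  have := hoeff_core (p := (1 + m) / 2) (q := (1 - m) / 2)
    (by linarith) (by linarith) (by ring) t
  convert this using 3 <;> ring

private lemma exp_cvx {x : ℝ} (hx : x ∈ Set.Icc (-1 : ℝ) 1) (t : ℝ) :
    Real.exp (t * x) ≤ (1 + x) / 2 * Real.exp t + (1 - x) / 2 * Real.exp (-t) := by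
  obtain ⟨h1, h2⟩ := hx
  have h := convexOn_exp.2 (Set.mem_univ t) (Set.mem_univ (-t))
    (show (0 : ℝ) ≤ (1 + x) / 2 by linarith)
    (show (0 : ℝ) ≤ (1 - x) / 2 by linarith) (by ring)
  simp only [smul_eq_mul] at h
  have harg : (1 + x) / 2 * t + (1 - x) / 2 * -t = t * x := by ring
  rwa [harg] at h

private lemma integ_aux {ν : Measure ℝ} [IsProbabilityMeasure ν]
    (hsupp : ∀ᵐ x ∂ν, x ∈ Set.Icc (-1 : ℝ) 1) {f : ℝ → ℝ} (hf : Continuous f) :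
    Integrable f ν := by
  obtain ⟨C, hC⟩ :=
    (isCompact_Icc (a := (-1 : ℝ)) (b := 1)).exists_bound_of_continuousOn hf.continuousOn
  exact (integrable_const C).mono' hf.aestronglyMeasurable (hsupp.mono fun x hx => hC x hx)

private lemma int_exp_pos {ν : Measure ℝ} [IsProbabilityMeasure ν]
    (hsupp : ∀ᵐ x ∂ν, x ∈ Set.Icc (-1 : ℝ) 1) {g : ℝ → ℝ} (hg : Continuous g) :
    0 < ∫ x, Real.exp (g x) ∂ν := by
  rw [integral_pos_iff_support_of_nonneg (fun x => (Real.exp_pos _).le)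
      (integ_aux hsupp (Real.continuous_exp.comp hg))]
  have : (Function.support fun x => Real.exp (g x)) = Set.univ := by
    ext x; simp [Function.support, Real.exp_ne_zero]
  rw [this]
  simp

private lemma weighted_mgf {ν : Measure ℝ} [IsProbabilityMeasure ν]
    (hsupp : ∀ᵐ x ∂ν, x ∈ Set.Icc (-1 : ℝ) 1) (u v t m : ℝ) (hm : |m| ≤ 1)
    (hM : ∫ x, x * Real.exp (u * x + v * x ^ 2) ∂ν
        = m * ∫ x, Real.exp (u * x + v * x ^ 2) ∂ν) :
    ∫ x, Real.exp (t * (x - m) + (u * x + v * x ^ 2)) ∂ν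
      ≤ (∫ x, Real.exp (u * x + v * x ^ 2) ∂ν) * Real.exp (t ^ 2 / 2) := by
  set Z := ∫ x, Real.exp (u * x + v * x ^ 2) ∂ν with hZ
  have hZpos : 0 < Z := int_exp_pos hsupp (by continuity)
  set a := Real.exp (-(t * m)) * ((Real.exp t + Real.exp (-t)) / 2) with ha
  set b := Real.exp (-(t * m)) * ((Real.exp t - Real.exp (-t)) / 2) with hb
  have step1 : ∫ x, Real.exp (t * (x - m) + (u * x + v * x ^ 2)) ∂ν
      ≤ ∫ x, (a * Real.exp (u * x + v * x ^ 2)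
            + b * (x * Real.exp (u * x + v * x ^ 2))) ∂ν := by
    apply integral_mono_ae (integ_aux hsupp (by continuity))
      ((integ_aux hsupp (by continuity)).const_mul a |>.add
        ((integ_aux hsupp (by continuity)).const_mul b))
    filter_upwards [hsupp] with x hx
    have h1 := exp_cvx hx t
    have h2 : Real.exp (t * (x - m) + (u * x + v * x ^ 2))
        = Real.exp (t * x) * (Real.exp (-(t * m)) * Real.exp (u * x + v * x ^ 2)) := by
      rw [← Real.exp_add, ← Real.exp_add]; ring_nf
    rw [h2]
    have h3 : a * Real.exp (u * x + v * x ^ 2) + b * (x * Real.exp (u * x + v * x ^ 2))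
        = ((1 + x) / 2 * Real.exp t + (1 - x) / 2 * Real.exp (-t))
          * (Real.exp (-(t * m)) * Real.exp (u * x + v * x ^ 2)) := by
      rw [ha, hb]; ring
    simp only [Pi.add_apply]
    rw [h3]
    exact mul_le_mul_of_nonneg_right h1 (by positivity)
  have step2 : ∫ x, (a * Real.exp (u * x + v * x ^ 2)
        + b * (x * Real.exp (u * x + v * x ^ 2))) ∂ν = a * Z + b * (m * Z) := by
    rw [integral_add ((integ_aux hsupp (by continuity)).const_mul a)
        ((integ_aux hsupp (by continuity)).const_mul b),
      integral_const_mul, integral_const_mul, hM]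
  have step3 : a * Z + b * (m * Z)
      = Z * (Real.exp (-(t * m)) * ((1 + m) / 2 * Real.exp t + (1 - m) / 2 * Real.exp (-t))) := by
    rw [ha, hb]; ring
  have step4 : Real.exp (-(t * m)) * ((1 + m) / 2 * Real.exp t + (1 - m) / 2 * Real.exp (-t))
      ≤ Real.exp (t ^ 2 / 2) := by
    have := hoeff_m hm t
    calc Real.exp (-(t * m)) * ((1 + m) / 2 * Real.exp t + (1 - m) / 2 * Real.exp (-t))
        ≤ Real.exp (-(t * m)) * Real.exp (m * t + t ^ 2 / 2) :=
          mul_le_mul_of_nonneg_left this (Real.exp_pos _).le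
      _ = Real.exp (t ^ 2 / 2) := by rw [← Real.exp_add]; ring_nf
  calc ∫ x, Real.exp (t * (x - m) + (u * x + v * x ^ 2)) ∂ν
      ≤ a * Z + b * (m * Z) := step1.trans_eq step2
    _ = Z * (Real.exp (-(t * m)) * ((1 + m) / 2 * Real.exp t + (1 - m) / 2 * Real.exp (-t))) := step3
    _ ≤ Z * Real.exp (t ^ 2 / 2) := mul_le_mul_of_nonneg_left step4 hZpos.le





set_option maxHeartbeats 1000000 in
/-- For i.i.d. spins `σ, τ` with values in `[-1,1]`,
`ψ(u,v,λ) ≤ ψ(u,v,0) + λ·(∂_u φ(u,v))² + 2λ²` for all `λ ≥ 0`. -/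
theorem psi_upper_bound
    {Ω : Type*} [MeasurableSpace Ω] (μ : Measure Ω) [IsProbabilityMeasure μ]
    (σ τ : Ω → ℝ) (hσ : Measurable σ) (hτ : Measurable τ)
    (hbdσ : ∀ ω, σ ω ∈ Set.Icc (-1 : ℝ) 1) (hbdτ : ∀ ω, τ ω ∈ Set.Icc (-1 : ℝ) 1)
    (hindep : IndepFun σ τ μ) (hid : Measure.map σ μ = Measure.map τ μ)
    (φ : ℝ → ℝ → ℝ)
    (hφ : ∀ u v, φ u v = Real.log (∫ ω, Real.exp (u * σ ω + v * (σ ω) ^ 2) ∂μ))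
    (ψ : ℝ → ℝ → ℝ → ℝ)
    (hψ : ∀ u v l, ψ u v l = Real.log (∫ ω,
      Real.exp (u * (σ ω + τ ω) + v * ((σ ω) ^ 2 + (τ ω) ^ 2) + l * σ ω * τ ω) ∂μ)) :
    ∀ (u v l : ℝ), 0 ≤ l →
      ψ u v l ≤ ψ u v 0 + l * (deriv (fun u' => φ u' v) u) ^ 2 + 2 * l ^ 2 := by
  intro u v l hl
  set ν : Measure ℝ := μ.map σ with hνdef
  haveI hprob : IsProbabilityMeasure ν := Measure.isProbabilityMeasure_map hσ.aemeasurable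
  have hsupp : ∀ᵐ x ∂ν, x ∈ Set.Icc (-1 : ℝ) 1 :=
    (ae_map_iff hσ.aemeasurable measurableSet_Icc).2 (Filter.Eventually.of_forall hbdσ)
  have hjoint : μ.map (fun ω => (σ ω, τ ω)) = ν.prod ν := by
    rw [(indepFun_iff_map_prod_eq_prod_map_map hσ.aemeasurable hτ.aemeasurable).mp hindep, ← hid]
  set Z := ∫ x, Real.exp (u * x + v * x ^ 2) ∂ν with hZdef
  set M := ∫ x, x * Real.exp (u * x + v * x ^ 2) ∂ν with hMdef
  have hZpos : 0 < Z := int_exp_pos hsupp (by fun_prop)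
  set m := M / Z with hmdef
  have hMZ : M = m * Z := by rw [hmdef, div_mul_cancel₀ _ hZpos.ne']
  have hmabs : |m| ≤ 1 := by
    have h0 : |M| ≤ ∫ x, |x * Real.exp (u * x + v * x ^ 2)| ∂ν := by
      have := norm_integral_le_integral_norm (μ := ν) (fun x => x * Real.exp (u * x + v * x ^ 2))
      simpa only [Real.norm_eq_abs] using this
    have h1 : ∫ x, |x * Real.exp (u * x + v * x ^ 2)| ∂ν ≤ Z := by
      apply integral_mono_ae ((integ_aux hsupp (by fun_prop)).abs) (integ_aux hsupp (by fun_prop))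
      filter_upwards [hsupp] with x hx
      obtain ⟨ha, hb⟩ := hx
      have hxa : |x| ≤ 1 := abs_le.2 ⟨ha, hb⟩
      rw [abs_mul, abs_of_pos (Real.exp_pos _)]
      nlinarith [Real.exp_pos (u * x + v * x ^ 2), abs_nonneg x]
    rw [hmdef, abs_div, abs_of_pos hZpos, div_le_one hZpos]
    linarith
  -- derivative of φ
  have hphi_int : ∀ u' : ℝ, (∫ ω, Real.exp (u' * σ ω + v * (σ ω) ^ 2) ∂μ)
      = ∫ x, Real.exp (u' * x + v * x ^ 2) ∂ν := by
    intro u'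
    rw [hνdef, integral_map hσ.aemeasurable
      ((by fun_prop : Continuous fun x : ℝ => Real.exp (u' * x + v * x ^ 2)).aestronglyMeasurable)]
  have hbound : ∀ᵐ x ∂ν, ∀ u' ∈ Metric.ball u 1,
      ‖x * Real.exp (u' * x + v * x ^ 2)‖ ≤ Real.exp (|u| + 1 + |v|) := by
    filter_upwards [hsupp] with x hx
    intro u' hu'
    obtain ⟨ha, hb⟩ := hx
    have hxa : |x| ≤ 1 := abs_le.2 ⟨ha, hb⟩
    have hu'' : |u'| ≤ |u| + 1 := by
      have h1 := Metric.mem_ball.1 hu'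
      rw [Real.dist_eq] at h1
      have h2 := abs_sub_abs_le_abs_sub u' u
      linarith
    have hE : u' * x + v * x ^ 2 ≤ |u| + 1 + |v| := by
      have e1 : u' * x ≤ |u'| * |x| := (le_abs_self _).trans (le_of_eq (abs_mul _ _))
      have e2 : v * x ^ 2 ≤ |v| * |x| ^ 2 := by
        calc v * x ^ 2 ≤ |v * x ^ 2| := le_abs_self _
          _ = |v| * |x| ^ 2 := by rw [abs_mul, abs_pow]
      have f1 : |u'| * |x| ≤ |u'| := mul_le_of_le_one_right (abs_nonneg u') hxa
      have f2 : |x| ^ 2 ≤ 1 := pow_le_one₀ (abs_nonneg x) hxa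
      have f3 : |v| * |x| ^ 2 ≤ |v| := mul_le_of_le_one_right (abs_nonneg v) f2
      linarith
    rw [Real.norm_eq_abs, abs_mul, abs_of_pos (Real.exp_pos _)]
    calc |x| * Real.exp (u' * x + v * x ^ 2)
        ≤ 1 * Real.exp (u' * x + v * x ^ 2) :=
          mul_le_mul_of_nonneg_right hxa (Real.exp_pos _).le
      _ ≤ Real.exp (|u| + 1 + |v|) := by rw [one_mul]; exact Real.exp_le_exp.2 hE
  have hdiff : ∀ᵐ x ∂ν, ∀ u' ∈ Metric.ball u 1,
      HasDerivAt (fun u'' => Real.exp (u'' * x + v * x ^ 2)) (x * Real.exp (u' * x + v * x ^ 2)) u' := by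
    filter_upwards with x
    intro u' _
    have h1 : HasDerivAt (fun u'' : ℝ => u'' * x + v * x ^ 2) x u' := by
      simpa using ((hasDerivAt_id u').mul_const x).add_const (v * x ^ 2)
    have h2 := h1.exp
    convert h2 using 1
    ring
  have hDerInt : HasDerivAt (fun u' => ∫ x, Real.exp (u' * x + v * x ^ 2) ∂ν) M u := by
    have h := hasDerivAt_integral_of_dominated_loc_of_deriv_le (𝕜 := ℝ) (μ := ν)
      (F := fun u' x => Real.exp (u' * x + v * x ^ 2))
      (F' := fun u' x => x * Real.exp (u' * x + v * x ^ 2))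
      (x₀ := u) (bound := fun _ => Real.exp (|u| + 1 + |v|)) (Metric.ball_mem_nhds u one_pos)
      (Filter.Eventually.of_forall fun u' =>
        (Continuous.aestronglyMeasurable (by fun_prop)))
      (integ_aux hsupp (by fun_prop))
      (Continuous.aestronglyMeasurable (by fun_prop))
      hbound (integrable_const _) hdiff
    exact h.2
  have hder : deriv (fun u' => φ u' v) u = m := by
    have hφeq : (fun u' => φ u' v)
        = fun u' => Real.log (∫ x, Real.exp (u' * x + v * x ^ 2) ∂ν) := by
      funext u'; rw [hφ, hphi_int]
    rw [hφeq, hmdef]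
    exact (hDerInt.log hZpos.ne').deriv
  -- joint integrals
  have hjint : ∀ c : ℝ, (∫ ω, Real.exp (u * (σ ω + τ ω) + v * ((σ ω) ^ 2 + (τ ω) ^ 2)
        + c * σ ω * τ ω) ∂μ)
      = ∫ p : ℝ × ℝ, Real.exp (u * (p.1 + p.2) + v * (p.1 ^ 2 + p.2 ^ 2)
        + c * p.1 * p.2) ∂(ν.prod ν) := by
    intro c
    rw [← hjoint, integral_map (hσ.aemeasurable.prodMk hτ.aemeasurable)
      (Continuous.aestronglyMeasurable (by fun_prop))]
  have hsupp2 : ∀ᵐ p : ℝ × ℝ ∂ν.prod ν,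
      p.1 ∈ Set.Icc (-1 : ℝ) 1 ∧ p.2 ∈ Set.Icc (-1 : ℝ) 1 := by
    have hcompl : ν (Set.Icc (-1 : ℝ) 1)ᶜ = 0 := by
      exact ae_iff.1 hsupp
    have h1 : ∀ᵐ p : ℝ × ℝ ∂ν.prod ν, p.1 ∈ Set.Icc (-1 : ℝ) 1 := by
      rw [ae_iff]
      have hset : {p : ℝ × ℝ | ¬p.1 ∈ Set.Icc (-1 : ℝ) 1}
          = (Set.Icc (-1 : ℝ) 1)ᶜ ×ˢ (Set.univ : Set ℝ) := by
        ext p; simp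
      rw [hset, Measure.prod_prod, hcompl, zero_mul]
    have h2 : ∀ᵐ p : ℝ × ℝ ∂ν.prod ν, p.2 ∈ Set.Icc (-1 : ℝ) 1 := by
      rw [ae_iff]
      have hset : {p : ℝ × ℝ | ¬p.2 ∈ Set.Icc (-1 : ℝ) 1}
          = (Set.univ : Set ℝ) ×ˢ (Set.Icc (-1 : ℝ) 1)ᶜ := by
        ext p; simp
      rw [hset, Measure.prod_prod, hcompl, mul_zero]
    exact h1.and h2
  have hintprod : ∀ c : ℝ, Integrable (fun p : ℝ × ℝ =>
      Real.exp (u * (p.1 + p.2) + v * (p.1 ^ 2 + p.2 ^ 2) + c * p.1 * p.2)) (ν.prod ν) := by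
    intro c
    refine (integrable_const (Real.exp (2 * |u| + 2 * |v| + |c|))).mono'
      (Continuous.aestronglyMeasurable (by fun_prop)) ?_
    filter_upwards [hsupp2] with p hp
    obtain ⟨⟨ha, hb⟩, ⟨hc, hd⟩⟩ := hp
    have hx : |p.1| ≤ 1 := abs_le.2 ⟨ha, hb⟩
    have hy : |p.2| ≤ 1 := abs_le.2 ⟨hc, hd⟩
    rw [Real.norm_eq_abs, abs_of_pos (Real.exp_pos _)]
    apply Real.exp_le_exp.2
    have e1 : u * (p.1 + p.2) ≤ |u| * (|p.1| + |p.2|) := by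
      calc u * (p.1 + p.2) ≤ |u * (p.1 + p.2)| := le_abs_self _
        _ = |u| * |p.1 + p.2| := abs_mul _ _
        _ ≤ |u| * (|p.1| + |p.2|) := mul_le_mul_of_nonneg_left (abs_add_le _ _) (abs_nonneg _)
    have e2 : v * (p.1 ^ 2 + p.2 ^ 2) ≤ |v| * (|p.1| ^ 2 + |p.2| ^ 2) := by
      calc v * (p.1 ^ 2 + p.2 ^ 2) ≤ |v * (p.1 ^ 2 + p.2 ^ 2)| := le_abs_self _
        _ = |v| * |p.1 ^ 2 + p.2 ^ 2| := abs_mul _ _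
        _ = |v| * (|p.1| ^ 2 + |p.2| ^ 2) := by
            rw [abs_of_nonneg (by positivity : (0:ℝ) ≤ p.1 ^ 2 + p.2 ^ 2)]
            rw [sq_abs, sq_abs]
    have e3 : c * p.1 * p.2 ≤ |c| * (|p.1| * |p.2|) := by
      calc c * p.1 * p.2 ≤ |c * p.1 * p.2| := le_abs_self _
        _ = |c| * (|p.1| * |p.2|) := by rw [abs_mul, abs_mul]; ring
    have f1 : |u| * (|p.1| + |p.2|) ≤ |u| * 2 :=
      mul_le_mul_of_nonneg_left (by linarith) (abs_nonneg u)
    have f2 : |p.1| ^ 2 ≤ 1 := pow_le_one₀ (abs_nonneg _) hx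
    have f3 : |p.2| ^ 2 ≤ 1 := pow_le_one₀ (abs_nonneg _) hy
    have f4 : |v| * (|p.1| ^ 2 + |p.2| ^ 2) ≤ |v| * 2 :=
      mul_le_mul_of_nonneg_left (by linarith) (abs_nonneg v)
    have f5 : |p.1| * |p.2| ≤ 1 := by
      calc |p.1| * |p.2| ≤ 1 * |p.2| := mul_le_mul_of_nonneg_right hx (abs_nonneg _)
        _ ≤ 1 := by rw [one_mul]; exact hy
    have f6 : |c| * (|p.1| * |p.2|) ≤ |c| := mul_le_of_le_one_right (abs_nonneg c) f5
    linarith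
  have hA0 : (∫ p : ℝ × ℝ, Real.exp (u * (p.1 + p.2) + v * (p.1 ^ 2 + p.2 ^ 2)
      + 0 * p.1 * p.2) ∂(ν.prod ν)) = Z * Z := by
    have hfact : (fun p : ℝ × ℝ => Real.exp (u * (p.1 + p.2) + v * (p.1 ^ 2 + p.2 ^ 2)
        + 0 * p.1 * p.2))
        = fun p : ℝ × ℝ => Real.exp (u * p.1 + v * p.1 ^ 2) * Real.exp (u * p.2 + v * p.2 ^ 2) := by
      funext p; rw [← Real.exp_add]; ring_nf
    rw [hfact]
    exact integral_prod_mul (fun x => Real.exp (u * x + v * x ^ 2))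
      (fun y => Real.exp (u * y + v * y ^ 2))
  -- main estimate
  have hkey : (∫ p : ℝ × ℝ, Real.exp (u * (p.1 + p.2) + v * (p.1 ^ 2 + p.2 ^ 2)
      + l * p.1 * p.2) ∂(ν.prod ν)) ≤ Z * Z * Real.exp (l * m ^ 2 + 2 * l ^ 2) := by
    rw [integral_prod _ (hintprod l)]
    set K := Real.exp (l * m ^ 2 + l ^ 2 / 2) * Z with hKdef
    have hKpos : 0 < K := by positivity
    have inner_le : ∀ x ∈ Set.Icc (-1 : ℝ) 1,
        (∫ y, Real.exp (u * (x + y) + v * (x ^ 2 + y ^ 2) + l * x * y) ∂ν)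
          ≤ K * Real.exp ((l * m) * (x - m) + (u * x + v * x ^ 2)) := by
      intro x hx
      obtain ⟨ha, hb⟩ := hx
      have hxa : |x| ≤ 1 := abs_le.2 ⟨ha, hb⟩
      have hrw : (fun y => Real.exp (u * (x + y) + v * (x ^ 2 + y ^ 2) + l * x * y))
          = fun y => (Real.exp (l * m ^ 2 + l * m * (x - m)) * Real.exp (u * x + v * x ^ 2))
              * Real.exp ((l * x) * (y - m) + (u * y + v * y ^ 2)) := by
        funext y
        rw [← Real.exp_add, ← Real.exp_add]
        ring_nf
      rw [hrw, integral_const_mul]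
      have h1 := weighted_mgf hsupp u v (l * x) m hmabs hMZ
      have h2 : Real.exp ((l * x) ^ 2 / 2) ≤ Real.exp (l ^ 2 / 2) := by
        apply Real.exp_le_exp.2
        have hx2 : x ^ 2 ≤ 1 := by rw [← sq_abs]; exact pow_le_one₀ (abs_nonneg x) hxa
        nlinarith [sq_nonneg l]
      have h3 : (∫ y, Real.exp ((l * x) * (y - m) + (u * y + v * y ^ 2)) ∂ν)
          ≤ Z * Real.exp (l ^ 2 / 2) := by
        calc (∫ y, Real.exp ((l * x) * (y - m) + (u * y + v * y ^ 2)) ∂ν)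
            ≤ Z * Real.exp ((l * x) ^ 2 / 2) := h1
          _ ≤ Z * Real.exp (l ^ 2 / 2) := mul_le_mul_of_nonneg_left h2 hZpos.le
      calc Real.exp (l * m ^ 2 + l * m * (x - m)) * Real.exp (u * x + v * x ^ 2)
            * ∫ y, Real.exp ((l * x) * (y - m) + (u * y + v * y ^ 2)) ∂ν
          ≤ Real.exp (l * m ^ 2 + l * m * (x - m)) * Real.exp (u * x + v * x ^ 2)
            * (Z * Real.exp (l ^ 2 / 2)) :=
            mul_le_mul_of_nonneg_left h3 (by positivity)
        _ = K * Real.exp ((l * m) * (x - m) + (u * x + v * x ^ 2)) := by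
            rw [hKdef, Real.exp_add (l * m ^ 2) (l * m * (x - m)),
              Real.exp_add (l * m ^ 2) (l ^ 2 / 2),
              Real.exp_add (l * m * (x - m)) (u * x + v * x ^ 2)]
            ring
    have outer1 : (∫ x, (∫ y, Real.exp (u * (x + y) + v * (x ^ 2 + y ^ 2) + l * x * y) ∂ν) ∂ν)
        ≤ ∫ x, K * Real.exp ((l * m) * (x - m) + (u * x + v * x ^ 2)) ∂ν := by
      apply integral_mono_ae ((hintprod l).integral_prod_left)
        ((integ_aux hsupp (by fun_prop)).const_mul K)
      filter_upwards [hsupp] with x hx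
      exact inner_le x hx
    have outer2 : (∫ x, K * Real.exp ((l * m) * (x - m) + (u * x + v * x ^ 2)) ∂ν)
        ≤ K * (Z * Real.exp ((l * m) ^ 2 / 2)) := by
      rw [integral_const_mul]
      exact mul_le_mul_of_nonneg_left (weighted_mgf hsupp u v (l * m) m hmabs hMZ) hKpos.le
    have final : K * (Z * Real.exp ((l * m) ^ 2 / 2)) ≤ Z * Z * Real.exp (l * m ^ 2 + 2 * l ^ 2) := by
      rw [hKdef]
      have hexp : Real.exp (l * m ^ 2 + l ^ 2 / 2) * Real.exp ((l * m) ^ 2 / 2)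
          ≤ Real.exp (l * m ^ 2 + 2 * l ^ 2) := by
        rw [← Real.exp_add]
        apply Real.exp_le_exp.2
        have hm2 : m ^ 2 ≤ 1 := by rw [← sq_abs]; exact pow_le_one₀ (abs_nonneg m) hmabs
        nlinarith [sq_nonneg l, sq_nonneg (l * m)]
      calc Real.exp (l * m ^ 2 + l ^ 2 / 2) * Z * (Z * Real.exp ((l * m) ^ 2 / 2))
          = Z * Z * (Real.exp (l * m ^ 2 + l ^ 2 / 2) * Real.exp ((l * m) ^ 2 / 2)) := by ring
        _ ≤ Z * Z * Real.exp (l * m ^ 2 + 2 * l ^ 2) :=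
            mul_le_mul_of_nonneg_left hexp (by positivity)
    exact (outer1.trans outer2).trans final
  -- positivity of the integral
  have hApos : 0 < ∫ p : ℝ × ℝ, Real.exp (u * (p.1 + p.2) + v * (p.1 ^ 2 + p.2 ^ 2)
      + l * p.1 * p.2) ∂(ν.prod ν) := by
    rw [integral_pos_iff_support_of_nonneg (fun p => (Real.exp_pos _).le) (hintprod l)]
    have hs : (Function.support fun p : ℝ × ℝ => Real.exp (u * (p.1 + p.2)
        + v * (p.1 ^ 2 + p.2 ^ 2) + l * p.1 * p.2)) = Set.univ := by
      ext p; simp [Function.support, Real.exp_ne_zero]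
    rw [hs]
    simp
  -- conclusion
  have hψl : ψ u v l = Real.log (∫ p : ℝ × ℝ, Real.exp (u * (p.1 + p.2)
      + v * (p.1 ^ 2 + p.2 ^ 2) + l * p.1 * p.2) ∂(ν.prod ν)) := by
    rw [hψ, hjint l]
  have hψ0 : ψ u v 0 = Real.log (Z * Z) := by
    rw [hψ, hjint 0, hA0]
  rw [hψl, hψ0, hder]
  calc Real.log (∫ p : ℝ × ℝ, Real.exp (u * (p.1 + p.2) + v * (p.1 ^ 2 + p.2 ^ 2)
        + l * p.1 * p.2) ∂(ν.prod ν))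
      ≤ Real.log (Z * Z * Real.exp (l * m ^ 2 + 2 * l ^ 2)) := Real.log_le_log hApos hkey
    _ = Real.log (Z * Z) + (l * m ^ 2 + 2 * l ^ 2) := by
        rw [Real.log_mul (by positivity) (Real.exp_ne_zero _), Real.log_exp]
    _ = Real.log (Z * Z) + l * m ^ 2 + 2 * l ^ 2 := by ring
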